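/- For every partition λ of 2n with an empty 2-core, sign_2(λ) = (−1)^{odd(λ)/2}, where odd(λ) is the number of odd parts of λ and sign_2(λ) = (−1)^{inv_2(λ) − inv_2(∅)} with inv_2 the inversion number of the mod-2 row-color sequence. -/

import Mathlib

/-- Boundary sequence of a partition (list of parts, weakly decreasing,
zero parts allowed and give leading `false`s): walk along the SE boundary
from SW corner to NE corner, `true` = east step, `false` = north step. -/
def bseq : List ℕ → List Bool
  | [] => []
  | a :: s => bseq s ++ List.replicate (a - s.headI) true ++ [false]

/-- A partition: weakly decreasing list of positive integers. -/
def IsPartition (l : List ℕ) : Prop := l.Pairwise (· ≥ ·) ∧ ∀ x ∈ l, 0 < x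

/-- The set of cells of the Young diagram (English convention, 0-indexed):
cell `(i, j)` is present iff `j < l_i`. -/
def cellSet (l : List ℕ) : Set (ℕ × ℕ) := {p | p.2 < l.getD p.1 0}

/-- Two cells are adjacent if they share an edge. -/
def CellAdj (p q : ℕ × ℕ) : Prop :=
  (p.1 = q.1 ∧ (p.2 + 1 = q.2 ∨ q.2 + 1 = p.2)) ∨
  (p.2 = q.2 ∧ (p.1 + 1 = q.1 ∨ q.1 + 1 = p.1))

/-- A set of cells is connected (via edge-adjacency within the set). -/
def ConnSet (S : Set (ℕ × ℕ)) : Prop :=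
  ∀ p ∈ S, ∀ q ∈ S, Relation.ReflTransGen (fun a b => b ∈ S ∧ CellAdj a b) p q

/-- A ribbon (border strip) of length `m`: a connected set of `m` cells
containing no 2×2 square. -/
 def IsRibbonSet (S : Set (ℕ × ℕ)) (m : ℕ) : Prop :=
  S.ncard = m ∧ ConnSet S ∧
  ∀ i j : ℕ, ¬((i, j) ∈ S ∧ (i + 1, j) ∈ S ∧ (i, j + 1) ∈ S ∧ (i + 1, j + 1) ∈ S)

/-- `l'` is obtained from `l` by peeling a ribbon of length `m`. -/
def PeelRibbon (m : ℕ) (l l' : List ℕ) : Prop :=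
  IsPartition l' ∧ cellSet l' ⊂ cellSet l ∧ IsRibbonSet (cellSet l \ cellSet l') m

/-- `l` has an empty `r`-core: it can be reduced to the empty partition by
successively peeling ribbons of length `r`. -/
def EmptyCore (r : ℕ) (l : List ℕ) : Prop :=
  Relation.ReflTransGen (fun x y => PeelRibbon r x y) l []

/-- The row-color sequence `a^(k)(λ)`: `a_i = (ℓ_i + k - i) mod r` (1-indexed),
here 0-indexed as `(l_i + k - i - 1) % r`. -/
def rcs (r k : ℕ) (l : List ℕ) : List ℕ :=
  (List.range k).map (fun i => (l.getD i 0 + k - i - 1) % r)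

/-- Inversion number of a word over a linearly ordered alphabet. -/
def invOn {α : Type*} [LinearOrder α] (w : List α) : ℕ :=
  (w.tails.map (fun t => match t with
    | [] => 0
    | a :: s => (s.filter (fun b => decide (b < a))).length)).sum

/-- `m_i` for a 0/1 (false/true) sequence: the number of `true`s among the
first `i` entries minus the number of `false`s among the remaining entries. -/
def mval (δ : List Bool) (i : ℕ) : ℤ :=
  ((δ.take i).count true : ℤ) - ((δ.drop i).count false : ℤ)

/-- The anchor of a 0/1 sequence is at position `i` (between indices `i` and
`i+1`) iff the number of `true`s before it equals the number of `false`s after it. -/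
def AnchorAt (δ : List Bool) (i : ℕ) : Prop :=
  (δ.take i).count true = (δ.drop i).count false

/-- The graph of the map `φ_r`: `IsPhi r Λ l` says that `l = φ_r (Λ 0, …, Λ (r-1))`,
i.e. the boundary sequences of the `Λ j` can be padded with leading `false`s and
trailing `true`s to a common length `t` and a common anchor position `i₀`, and the
interlaced sequence is a padding of the boundary sequence of `l`. -/
def IsPhi (r : ℕ) (Λ : ℕ → List ℕ) (l : List ℕ) : Prop :=
  ∃ (t i₀ : ℕ) (s : ℕ → List Bool) (p q : ℕ → ℕ),
    (∀ j < r,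
      s j = List.replicate (p j) false ++ bseq (Λ j) ++ List.replicate (q j) true ∧
      (s j).length = t ∧ AnchorAt (s j) i₀) ∧
    ∃ P Q : ℕ,
      List.replicate P false ++ bseq l ++ List.replicate Q true =
        (List.range (r * t)).map (fun v => (s (v % r)).getD (v / r) false)

/-- The height of a ribbon: one less than its number of rows. -/
noncomputable def htOf (S : Set (ℕ × ℕ)) : ℕ := (Prod.fst '' S).ncard - 1

/- ### Auxiliary lemmas -/

lemma invOn_nil' {α : Type*} [LinearOrder α] : invOn ([] : List α) = 0 := by simp [invOn]

lemma invOn_cons {α : Type*} [LinearOrder α] (a : α) (s : List α) :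
    invOn (a :: s) = (s.countP (fun b => decide (b < a))) + invOn s := by
  simp [invOn, List.countP_eq_length_filter]

lemma invOn_swap {α : Type*} [LinearOrder α] {a b : α} (hab : a < b) (u v : List α) :
    invOn (u ++ b :: a :: v) = invOn (u ++ a :: b :: v) + 1 := by
  induction u with
  | nil =>
    simp only [List.nil_append, invOn_cons, List.countP_cons]
    have h1 : ¬ (b < a) := not_lt.2 hab.le
    simp [hab, h1]
    omega
  | cons c u ih =>
    simp only [List.cons_append, invOn_cons, ih, List.countP_append, List.countP_cons]
    omega

lemma countP_eq_range (p : ℕ → Bool) (hp : p 0 = false) :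
    ∀ (l : List ℕ) (k : ℕ), l.length ≤ k →
      l.countP p = (List.range k).countP (fun i => p (l.getD i 0)) := by
  intro l
  induction l with
  | nil => intro k _; simp [hp]
  | cons a t ih =>
    intro k hk
    cases k with
    | zero => simp at hk
    | succ k' =>
      rw [List.range_succ_eq_map]
      simp only [List.countP_cons, List.countP_map]
      have : ((List.range k').countP ((fun i => p ((a :: t).getD i 0)) ∘ Nat.succ))
          = (List.range k').countP (fun i => p (t.getD i 0)) := by
        apply List.countP_congr
        intro x _
        simp [Function.comp, List.getD_cons_succ]
      rw [this, ← ih k' (by simpa using hk)]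
      simp [List.getD_cons_zero]

lemma range_decomp (i k : ℕ) (h : i + 2 ≤ k) :
    List.range k = List.range i ++ [i, i+1] ++ (List.range (k - i - 2)).map (fun t => i + 2 + t) := by
  conv_lhs => rw [show k = (i + 2) + (k - i - 2) by omega]
  rw [List.range_add]
  congr 1
  show List.range (i + 1 + 1) = _
  rw [List.range_succ, List.range_succ]
  simp

lemma cell_mono {l l' : List ℕ} (h : cellSet l' ⊆ cellSet l) (i : ℕ) :
    l'.getD i 0 ≤ l.getD i 0 := by
  by_contra hc
  push_neg at hc
  exact absurd (h (show ((i, l.getD i 0) : ℕ × ℕ) ∈ cellSet l' from hc)) (by simp [cellSet])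

lemma getD_pos_lt {l : List ℕ} {i : ℕ} (h : 0 < l.getD i 0) : i < l.length := by
  by_contra hc
  push_neg at hc
  rw [List.getD_eq_default _ _ hc] at h
  omega

lemma length_le_of_le {l l' : List ℕ} (h' : ∀ x ∈ l', 0 < x)
    (hle : ∀ i, l'.getD i 0 ≤ l.getD i 0) : l'.length ≤ l.length := by
  by_contra hc
  push_neg at hc
  have h1 : 0 < l'.getD l.length 0 := by
    rw [List.getD_eq_getElem _ _ hc]
    exact h' _ (List.getElem_mem _)
  have h2 := hle l.length
  rw [List.getD_eq_default _ _ le_rfl] at h2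
  omega

lemma peel_two {l l' : List ℕ} (h : PeelRibbon 2 l l') :
    (∃ i, l.getD i 0 = l'.getD i 0 + 2 ∧ ∀ j, j ≠ i → l.getD j 0 = l'.getD j 0) ∨
    (∃ i, l.getD i 0 = l'.getD i 0 + 1 ∧ l.getD (i+1) 0 = l'.getD (i+1) 0 + 1 ∧
      l.getD i 0 = l.getD (i+1) 0 ∧
      ∀ j, j ≠ i → j ≠ i+1 → l.getD j 0 = l'.getD j 0) := by
  obtain ⟨hpart', hsub, hcard, hconn, -⟩ := h
  have hle : ∀ i, l'.getD i 0 ≤ l.getD i 0 := cell_mono hsub.subset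
  set D := cellSet l \ cellSet l' with hD
  have hmem : ∀ p : ℕ × ℕ, p ∈ D ↔ (l'.getD p.1 0 ≤ p.2 ∧ p.2 < l.getD p.1 0) := by
    intro p
    simp only [hD, Set.mem_diff, cellSet, Set.mem_setOf_eq]
    constructor
    · rintro ⟨h1, h2⟩; exact ⟨not_lt.1 h2, h1⟩
    · rintro ⟨h1, h2⟩; exact ⟨h2, not_lt.2 h1⟩
  obtain ⟨p, q, hpq, hDeq⟩ := Set.ncard_eq_two.1 hcard
  have hpD : p ∈ D := by rw [hDeq]; simp
  have hqD : q ∈ D := by rw [hDeq]; simp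
  have hp := (hmem p).1 hpD
  have hq := (hmem q).1 hqD
  have hrow : ∀ j, j ≠ p.1 → j ≠ q.1 → l.getD j 0 = l'.getD j 0 := by
    intro j hj1 hj2
    by_contra hc
    have hlt : l'.getD j 0 < l.getD j 0 := lt_of_le_of_ne (hle j) (Ne.symm hc)
    have : ((j, l'.getD j 0) : ℕ × ℕ) ∈ D := (hmem _).2 ⟨le_rfl, hlt⟩
    rw [hDeq] at this
    simp only [Set.mem_insert_iff, Set.mem_singleton_iff] at this
    rcases this with h | h
    · exact hj1 (congrArg Prod.fst h)
    · exact hj2 (congrArg Prod.fst h)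
  by_cases hrows : p.1 = q.1
  · left
    refine ⟨p.1, ?_, ?_⟩
    · have hj : ∀ j, l'.getD p.1 0 ≤ j → j < l.getD p.1 0 → j = p.2 ∨ j = q.2 := by
        intro j h1 h2
        have : ((p.1, j) : ℕ × ℕ) ∈ D := (hmem _).2 ⟨h1, h2⟩
        rw [hDeq] at this
        simp only [Set.mem_insert_iff, Set.mem_singleton_iff] at this
        rcases this with h | h
        · left; exact congrArg Prod.snd h
        · right; exact congrArg Prod.snd h
      have hne : p.2 ≠ q.2 := by
        intro he; exact hpq (Prod.ext hrows he)
      have e1 : l.getD q.1 0 = l.getD p.1 0 := by rw [hrows]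
      have e2 : l'.getD q.1 0 = l'.getD p.1 0 := by rw [hrows]
      rw [e1, e2] at hq
      by_cases hbig : l'.getD p.1 0 + 3 ≤ l.getD p.1 0
      · have h1 := hj (l'.getD p.1 0) le_rfl (by omega)
        have h2 := hj (l'.getD p.1 0 + 1) (by omega) (by omega)
        have h3 := hj (l'.getD p.1 0 + 2) (by omega) (by omega)
        omega
      · omega
    · intro j hj; exact hrow j hj (by rw [← hrows]; exact hj)
  · right
    have hone : ∀ r : ℕ × ℕ, r ∈ D → (∀ s : ℕ × ℕ, s ∈ D → s ≠ r → s.1 ≠ r.1) →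
        l.getD r.1 0 = l'.getD r.1 0 + 1 ∧ r.2 = l'.getD r.1 0 := by
      intro r hr hunique
      have hrm := (hmem r).1 hr
      have hj : ∀ j, l'.getD r.1 0 ≤ j → j < l.getD r.1 0 → j = r.2 := by
        intro j h1 h2
        have hmemj : ((r.1, j) : ℕ × ℕ) ∈ D := (hmem _).2 ⟨h1, h2⟩
        by_contra hc
        have : ((r.1, j) : ℕ × ℕ) ≠ r := by
          intro he; exact hc (by rw [← he])
        exact (hunique _ hmemj this) rfl
      by_cases hbig : l'.getD r.1 0 + 2 ≤ l.getD r.1 0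
      · have h1 := hj (l'.getD r.1 0) le_rfl (by omega)
        have h2 := hj (l'.getD r.1 0 + 1) (by omega) (by omega)
        omega
      · have h1 := hj (l'.getD r.1 0) le_rfl (by omega)
        omega
    have hpu : ∀ s : ℕ × ℕ, s ∈ D → s ≠ p → s.1 ≠ p.1 := by
      intro s hs hsp
      rw [hDeq] at hs
      simp only [Set.mem_insert_iff, Set.mem_singleton_iff] at hs
      rcases hs with h | h
      · exact absurd h hsp
      · rw [h]; exact fun he => hrows he.symm
    have hqu : ∀ s : ℕ × ℕ, s ∈ D → s ≠ q → s.1 ≠ q.1 := by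
      intro s hs hsq
      rw [hDeq] at hs
      simp only [Set.mem_insert_iff, Set.mem_singleton_iff] at hs
      rcases hs with h | h
      · rw [h]; exact hrows
      · exact absurd h hsq
    obtain ⟨hp1, hp2⟩ := hone p hpD hpu
    obtain ⟨hq1, hq2⟩ := hone q hqD hqu
    have hadj : CellAdj p q := by
      have := hconn p hpD q hqD
      rcases (Relation.ReflTransGen.cases_head this) with he | ⟨c, ⟨hcD, hadj⟩, -⟩
      · exact absurd he hpq
      · rw [hDeq] at hcD
        simp only [Set.mem_insert_iff, Set.mem_singleton_iff] at hcD
        rcases hcD with h | h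
        · subst h
          rcases hadj with ⟨-, h2⟩ | ⟨-, h2⟩ <;> omega
        · subst h; exact hadj
    have hcol : p.2 = q.2 ∧ (p.1 + 1 = q.1 ∨ q.1 + 1 = p.1) := by
      rcases hadj with ⟨h1, -⟩ | h
      · exact absurd h1 hrows
      · exact h
    obtain ⟨hc1, hc2⟩ := hcol
    rcases hc2 with hc2 | hc2
    · refine ⟨p.1, ?_, ?_, ?_, ?_⟩
      · omega
      · rw [hc2]; omega
      · rw [hc2]; omega
      · intro j hj1 hj2; exact hrow j hj1 (by rw [← hc2]; exact hj2)
    · refine ⟨q.1, ?_, ?_, ?_, ?_⟩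
      · omega
      · rw [hc2]; omega
      · rw [hc2]; omega
      · intro j hj1 hj2; exact hrow j (by rw [← hc2]; exact hj2) hj1

theorem sign_two_eq_odd_parts_formula
    (n k : ℕ) (l : List ℕ) (hl : IsPartition l) (hsum : l.sum = 2 * n)
    (hcore : EmptyCore 2 l) (hk : l.length ≤ k) :
    (-1 : ℤ) ^ invOn (rcs 2 k l) * (-1 : ℤ) ^ invOn (rcs 2 k []) =
      (-1 : ℤ) ^ ((l.countP (fun x => decide (x % 2 = 1))) / 2) := by
  clear hsum
  set p : ℕ → Bool := fun x => decide (x % 2 = 1) with hpdef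
  have hp0 : p 0 = false := by decide
  induction hcore using Relation.ReflTransGen.head_induction_on with
  | refl =>
    simp only [List.countP_nil, Nat.zero_div, pow_zero, ← pow_add]
    exact Even.neg_one_pow ⟨invOn (rcs 2 k []), rfl⟩
  | head hstep htail ih =>
    rename_i a c
    have hpc : IsPartition c := hstep.1
    have hle : ∀ i, c.getD i 0 ≤ a.getD i 0 := cell_mono hstep.2.1.subset
    have hlenc : c.length ≤ k := le_trans (length_le_of_le hpc.2 hle) hk
    have ihc := ih hpc hlenc
    rcases peel_two hstep with ⟨i, h1, h2⟩ | ⟨i, h1, h2, h3, h4⟩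
    · -- horizontal domino
      have hrcs : rcs 2 k a = rcs 2 k c := by
        unfold rcs
        apply List.map_congr_left
        intro j hj
        simp only [List.mem_range] at hj
        by_cases hji : j = i
        · subst hji; rw [h1]; omega
        · rw [h2 j hji]
      have hcnt : a.countP p = c.countP p := by
        rw [countP_eq_range p hp0 a k hk, countP_eq_range p hp0 c k hlenc]
        apply List.countP_congr
        intro j _
        by_cases hji : j = i
        · rw [hji]
          simp only [hpdef, decide_eq_true_eq]
          omega
        · rw [h2 j hji]
      rw [hrcs, hcnt]
      exact ihc
    · -- vertical domino
      have hik : i + 2 ≤ k := by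
        have hpos : 0 < a.getD (i+1) 0 := by omega
        have := getD_pos_lt hpos
        omega
      set fa : ℕ → ℕ := fun j => (a.getD j 0 + k - j - 1) % 2 with hfa
      set fc : ℕ → ℕ := fun j => (c.getD j 0 + k - j - 1) % 2 with hfc
      have hu : (List.range i).map fa = (List.range i).map fc := by
        apply List.map_congr_left
        intro j hj
        simp only [List.mem_range] at hj
        simp only [hfa, hfc]
        rw [h4 j (by omega) (by omega)]
      have hv : ((List.range (k - i - 2)).map (fun t => i + 2 + t)).map fa
          = ((List.range (k - i - 2)).map (fun t => i + 2 + t)).map fc := by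
        apply List.map_congr_left
        intro j hj
        simp only [List.mem_map, List.mem_range] at hj
        obtain ⟨t, -, rfl⟩ := hj
        simp only [hfa, hfc]
        rw [h4 (i+2+t) (by omega) (by omega)]
      have hfci : fc i = fa (i+1) := by
        simp only [hfa, hfc]
        omega
      have hfci1 : fc (i+1) = fa i := by
        simp only [hfa, hfc]
        omega
      have hrcsa : rcs 2 k a = (List.range i).map fa ++
          fa i :: fa (i+1) :: ((List.range (k - i - 2)).map (fun t => i + 2 + t)).map fa := by
        show (List.range k).map fa = _
        rw [range_decomp i k hik]
        simp [List.map_append]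
      have hrcsc : rcs 2 k c = (List.range i).map fa ++
          fa (i+1) :: fa i :: ((List.range (k - i - 2)).map (fun t => i + 2 + t)).map fa := by
        show (List.range k).map fc = _
        rw [range_decomp i k hik]
        simp only [List.map_append, List.map_cons, List.map_nil]
        rw [← hu, ← hv, hfci, hfci1]
        simp
      -- the two middle entries are distinct bits
      have hbits : (fa i = 1 ∧ fa (i+1) = 0) ∨ (fa i = 0 ∧ fa (i+1) = 1) := by
        simp only [hfa]
        omega
      have hsign : (-1 : ℤ) ^ invOn (rcs 2 k a) = -(-1 : ℤ) ^ invOn (rcs 2 k c) := by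
        rcases hbits with ⟨hx, hy⟩ | ⟨hx, hy⟩
        · have := invOn_swap (show (0:ℕ) < 1 by norm_num)
            ((List.range i).map fa)
            (((List.range (k - i - 2)).map (fun t => i + 2 + t)).map fa)
          rw [hrcsa, hrcsc, hx, hy, this]
          rw [pow_succ]
          ring
        · have := invOn_swap (show (0:ℕ) < 1 by norm_num)
            ((List.range i).map fa)
            (((List.range (k - i - 2)).map (fun t => i + 2 + t)).map fa)
          rw [hrcsa, hrcsc, hx, hy, this]
          rw [pow_succ]
          ring
      -- counts differ by exactly 2
      have hcnt2 : a.countP p = c.countP p + 2 ∨ c.countP p = a.countP p + 2 := by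
        rw [countP_eq_range p hp0 a k hk, countP_eq_range p hp0 c k hlenc]
        rw [range_decomp i k hik]
        simp only [List.countP_append, List.countP_cons, List.countP_nil, List.countP_map]
        have e1 : (List.range i).countP (fun j => p (a.getD j 0))
            = (List.range i).countP (fun j => p (c.getD j 0)) := by
          apply List.countP_congr
          intro j hj
          simp only [List.mem_range] at hj
          rw [h4 j (by omega) (by omega)]
        have e2 : (List.range (k - i - 2)).countP ((fun j => p (a.getD j 0)) ∘ (fun t => i + 2 + t))
            = (List.range (k - i - 2)).countP ((fun j => p (c.getD j 0)) ∘ (fun t => i + 2 + t)) := by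
          apply List.countP_congr
          intro t _
          simp only [Function.comp]
          rw [h4 (i+2+t) (by omega) (by omega)]
        rw [e1, e2]
        simp only [hpdef]
        by_cases hm : c.getD i 0 % 2 = 1
        · right
          have b1 : decide (a.getD i 0 % 2 = 1) = false := by
            apply decide_eq_false; omega
          have b2 : decide (a.getD (i+1) 0 % 2 = 1) = false := by
            apply decide_eq_false; omega
          have b3 : decide (c.getD i 0 % 2 = 1) = true := by
            apply decide_eq_true; omega
          have b4 : decide (c.getD (i+1) 0 % 2 = 1) = true := by
            apply decide_eq_true; omega
          rw [b1, b2, b3, b4]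
          simp
          omega
        · left
          have b1 : decide (a.getD i 0 % 2 = 1) = true := by
            apply decide_eq_true; omega
          have b2 : decide (a.getD (i+1) 0 % 2 = 1) = true := by
            apply decide_eq_true; omega
          have b3 : decide (c.getD i 0 % 2 = 1) = false := by
            apply decide_eq_false; omega
          have b4 : decide (c.getD (i+1) 0 % 2 = 1) = false := by
            apply decide_eq_false; omega
          rw [b1, b2, b3, b4]
          simp
          omega
      have hsignc : (-1 : ℤ) ^ (a.countP p / 2) = -(-1 : ℤ) ^ (c.countP p / 2) := by
        rcases hcnt2 with he | he
        · rw [he, show (c.countP p + 2) / 2 = c.countP p / 2 + 1 by omega, pow_succ]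
          ring
        · rw [show c.countP p / 2 = a.countP p / 2 + 1 by omega, pow_succ] at ihc ⊢
          ring
      rw [hsign, hsignc, neg_mul, ihc]
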